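/- Let G be a k-uniform hypergraph that can be decomposed into edge-disjoint closed tight walks W_0, W_1, …, W_m covering all edges, where W_0 is spanning (every ordered (k−1)-tuple of distinct vertices appears consecutively in W_0). Then G has a tight Euler tour. -/

import Mathlib

open Finset
open scoped Classical

/-- The edge traversed at position `i` of a cyclic vertex sequence `x` of length `ℓ`. -/
noncomputable def windowEdge {V : Type*} [DecidableEq V] (k ℓ : ℕ) (x : ZMod ℓ → V)
    (i : ZMod ℓ) : Finset V :=
  (Finset.range k).image (fun j => x (i + (j : ZMod ℓ)))

/-- The edge traversed at position `n` of a `ℕ`-indexed (periodic) vertex sequence. -/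
private lemma windowEdge_eq {V : Type*} [DecidableEq V] (k ℓ : ℕ) (x : ZMod ℓ → V)
    (i : ZMod ℓ) :
    windowEdge k ℓ x i = (Finset.range k).image (fun j : ℕ => x (i + (j : ZMod ℓ))) := by
  unfold windowEdge
  simp only [Finset.bind_def, Finset.pure_def, Finset.sup_eq_biUnion,
    Finset.biUnion_singleton, Finset.image_image]
  rfl

/-- The edge traversed at position `n` of a `ℕ`-indexed vertex sequence. -/
private def win {V : Type*} [DecidableEq V] (k : ℕ) (f : ℕ → V) (n : ℕ) : Finset V :=
  (Finset.range k).image (fun j => f (n + j))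

private lemma per_mod {V : Type*} {y : ℕ → V} {L : ℕ} (hL : 0 < L)
    (hp : ∀ n, y (n + L) = y n) (n : ℕ) : y n = y (n % L) := by
  conv_lhs => rw [← Nat.div_add_mod n L]
  generalize n / L = t
  induction t with
  | zero => simp
  | succ t ih =>
    rw [Nat.mul_succ]
    have e : L * t + L + n % L = (L * t + n % L) + L := by ring
    rw [e, hp]
    exact ih

private lemma win_mod {V : Type*} [DecidableEq V] {y : ℕ → V} {L : ℕ} (hL : 0 < L)
    (hp : ∀ n, y (n + L) = y n) (k n : ℕ) : win k y n = win k y (n % L) := by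
  unfold win
  apply Finset.image_congr
  intro j _
  show y (n + j) = y (n % L + j)
  rw [per_mod hL hp (n + j), per_mod hL hp (n % L + j), Nat.add_mod n j,
    Nat.add_mod (n % L) j, Nat.mod_mod_of_dvd n dvd_rfl]

private lemma aux {V : Type*} [DecidableEq V] (k : ℕ) (hk : 1 ≤ k)
    (G : Finset (Finset V)) (hGk : ∀ e ∈ G, e.card = k) :
    ∀ m (ℓ : Fin (m + 1) → ℕ) (f : Fin (m + 1) → ℕ → V),
      (∀ i, 0 < ℓ i) →
      (∀ i n, f i (n + ℓ i) = f i n) →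
      (∀ i n, win k (f i) n ∈ G) →
      (∀ e ∈ G, ∃ i n, n < ℓ i ∧ win k (f i) n = e) →
      (∀ i n i' n', n < ℓ i → n' < ℓ i' →
        win k (f i) n = win k (f i') n' → i = i' ∧ n = n') →
      (∀ t : Fin (k - 1) → V, Function.Injective t →
        ∃ a, a < ℓ 0 ∧ ∀ j : Fin (k - 1), f 0 (a + (j : ℕ)) = t j) →
      ∃ L, 0 < L ∧ ∃ y : ℕ → V, (∀ n, y (n + L) = y n) ∧ (∀ n, win k y n ∈ G) ∧
        (∀ e ∈ G, ∃ n, n < L ∧ win k y n = e) ∧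
        (∀ n n', n < L → n' < L → win k y n = win k y n' → n = n') := by
  intro m
  induction m with
  | zero =>
    intro ℓ f hℓ hper hwalk hpart huniq _
    refine ⟨ℓ 0, hℓ 0, f 0, hper 0, hwalk 0, ?_, ?_⟩
    · intro e he
      obtain ⟨i, n, hn, hw⟩ := hpart e he
      have hi : i = 0 := Fin.ext (by simpa using Nat.lt_one_iff.mp i.isLt)
      exact ⟨n, hi ▸ hn, hi ▸ hw⟩
    · intro n n' hn hn' hw
      exact (huniq 0 n 0 n' hn hn' hw).2
  | succ m IH =>
    intro ℓ f hℓ hper hwalk hpart huniq hspan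
    have hp0 : 0 < ℓ 0 := hℓ 0
    have hq0 : 0 < ℓ (Fin.last (m + 1)) := hℓ (Fin.last (m + 1))
    -- the last walk is injective on a window, hence its length is ≥ k
    have hcard : ((range k).image fun j => f (Fin.last (m + 1)) j).card = k := by
      have h0 := hGk _ (hwalk (Fin.last (m + 1)) 0)
      have he : win k (f (Fin.last (m + 1))) 0 =
          (range k).image fun j => f (Fin.last (m + 1)) j := by
        unfold win
        apply Finset.image_congr
        intro j _
        simp
      rwa [he] at h0
    have hinjg : Set.InjOn (fun j => f (Fin.last (m + 1)) j) (range k) := by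
      apply Finset.injOn_of_card_image_eq
      rw [hcard, card_range]
    have hq : k ≤ ℓ (Fin.last (m + 1)) := by
      by_contra hlt
      push_neg at hlt
      have h1 : f (Fin.last (m + 1)) (ℓ (Fin.last (m + 1))) = f (Fin.last (m + 1)) 0 := by
        have := hper (Fin.last (m + 1)) 0
        simpa using this
      have h2 := hinjg (mem_coe.mpr (mem_range.mpr hlt)) (mem_coe.mpr (mem_range.mpr hk)) h1
      omega
    -- find where the first (k-1)-tuple of the last walk sits inside walk 0
    have htinj : Function.Injective (fun j : Fin (k - 1) => f (Fin.last (m + 1)) (j : ℕ)) := by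
      intro j1 j2 hj
      have h1 : (j1 : ℕ) ∈ (range k : Finset ℕ) := by
        have := j1.2; simp only [mem_coe, mem_range]; omega
      have h2 : (j2 : ℕ) ∈ (range k : Finset ℕ) := by
        have := j2.2; simp only [mem_coe, mem_range]; omega
      exact Fin.ext (hinjg h1 h2 hj)
    obtain ⟨a, hap, hov0⟩ := hspan _ htinj
    have hov : ∀ j, j < k - 1 → f 0 (a + j) = f (Fin.last (m + 1)) j :=
      fun j hj => hov0 ⟨j, hj⟩
    -- the merged walk
    set L0 := ℓ 0 + ℓ (Fin.last (m + 1)) with hL0def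
    have hL0 : 0 < L0 := by omega
    set h : ℕ → V := fun n =>
      if n % L0 < a then f 0 (n % L0)
      else if n % L0 < a + ℓ (Fin.last (m + 1)) then f (Fin.last (m + 1)) (n % L0 - a)
      else f 0 (n % L0 - ℓ (Fin.last (m + 1))) with hdef
    have hmod : ∀ n, h n = h (n % L0) := by
      intro n
      simp only [hdef]
      rw [Nat.mod_eq_of_lt (Nat.mod_lt n hL0)]
    have hperh : ∀ n, h (n + L0) = h n := by
      intro n
      rw [hmod (n + L0), hmod n, Nat.add_mod_right]
    have factA : ∀ n, n < a + (k - 1) → h n = f 0 n := by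
      intro n hn
      have hnL : n < L0 := by omega
      simp only [hdef]
      rw [Nat.mod_eq_of_lt hnL]
      by_cases h1 : n < a
      · rw [if_pos h1]
      · rw [if_neg h1, if_pos (by omega)]
        have := hov (n - a) (by omega)
        rw [← this]
        congr 1
        omega
    have factC : ∀ n, a + ℓ (Fin.last (m + 1)) ≤ n → n < L0 + (a + (k - 1)) →
        h n = f 0 (n - ℓ (Fin.last (m + 1))) := by
      intro n h1 h2
      by_cases hn : n < L0
      · simp only [hdef]
        rw [Nat.mod_eq_of_lt hn, if_neg (by omega), if_neg (by omega)]
      · push_neg at hn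
        have e0 : n % L0 = n - L0 := by
          rw [Nat.mod_eq_sub_mod hn, Nat.mod_eq_of_lt (by omega)]
        have e1 : h n = h (n - L0) := by rw [hmod n, e0]
        rw [e1, factA _ (by omega)]
        have := hper 0 (n - L0)
        rw [← this]
        congr 1
        omega
    have factB : ∀ n, a ≤ n → n < a + ℓ (Fin.last (m + 1)) + (k - 1) →
        h n = f (Fin.last (m + 1)) (n - a) := by
      intro n h1 h2
      by_cases hn : n < a + ℓ (Fin.last (m + 1))
      · simp only [hdef]
        rw [Nat.mod_eq_of_lt (by omega), if_neg (by omega), if_pos (by omega)]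
      · push_neg at hn
        rw [factC n hn (by omega)]
        have e1 : f 0 (n - ℓ (Fin.last (m + 1))) =
            f (Fin.last (m + 1)) (n - ℓ (Fin.last (m + 1)) - a) := by
          have := hov (n - ℓ (Fin.last (m + 1)) - a) (by omega)
          rw [← this]
          congr 1
          omega
        rw [e1, ← hper (Fin.last (m + 1)) (n - ℓ (Fin.last (m + 1)) - a)]
        congr 1
        omega
    -- the three kinds of windows of the merged walk
    have W1 : ∀ r, r < a → win k h r = win k (f 0) r := by
      intro r hr
      unfold win
      apply Finset.image_congr
      intro j hj
      simp only [mem_coe, mem_range] at hj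
      exact factA (r + j) (by omega)
    have W2 : ∀ r, a ≤ r → r < a + ℓ (Fin.last (m + 1)) →
        win k h r = win k (f (Fin.last (m + 1))) (r - a) := by
      intro r h1 h2
      unfold win
      apply Finset.image_congr
      intro j hj
      simp only [mem_coe, mem_range] at hj
      show h (r + j) = f (Fin.last (m + 1)) (r - a + j)
      rw [factB (r + j) (by omega) (by omega)]
      congr 1
      omega
    have W3 : ∀ r, a + ℓ (Fin.last (m + 1)) ≤ r → r < L0 →
        win k h r = win k (f 0) (r - ℓ (Fin.last (m + 1))) := by
      intro r h1 h2
      unfold win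
      apply Finset.image_congr
      intro j hj
      simp only [mem_coe, mem_range] at hj
      show h (r + j) = f 0 (r - ℓ (Fin.last (m + 1)) + j)
      rw [factC (r + j) (by omega) (by omega)]
      congr 1
      omega
    have key : ∀ n, n < L0 → ∃ I N, N < ℓ I ∧ win k h n = win k (f I) N ∧
        ((I = 0 ∧ n < a ∧ N = n) ∨
         (I = Fin.last (m + 1) ∧ a ≤ n ∧ n < a + ℓ (Fin.last (m + 1)) ∧ N = n - a) ∨
         (I = 0 ∧ a + ℓ (Fin.last (m + 1)) ≤ n ∧ N = n - ℓ (Fin.last (m + 1)))) := by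
      intro n hn
      by_cases c1 : n < a
      · exact ⟨0, n, by omega, W1 n c1, Or.inl ⟨rfl, c1, rfl⟩⟩
      · by_cases c2 : n < a + ℓ (Fin.last (m + 1))
        · exact ⟨Fin.last (m + 1), n - a, by omega, W2 n (by omega) c2,
            Or.inr (Or.inl ⟨rfl, by omega, c2, rfl⟩)⟩
        · exact ⟨0, n - ℓ (Fin.last (m + 1)), by omega, W3 n (by omega) hn,
            Or.inr (Or.inr ⟨rfl, by omega, rfl⟩)⟩
    -- the new family of m+1 walks
    set ℓ' : Fin (m + 1) → ℕ :=
      fun i => if i = 0 then L0 else ℓ (Fin.castSucc i) with hℓ'def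
    set f' : Fin (m + 1) → ℕ → V :=
      fun i => if i = 0 then h else f (Fin.castSucc i) with hf'def
    refine IH ℓ' f' ?_ ?_ ?_ ?_ ?_ ?_
    · intro i
      by_cases hi : i = 0
      · simp only [hℓ'def, hi, if_pos rfl]; omega
      · simp only [hℓ'def, if_neg hi]; exact hℓ _
    · intro i n
      by_cases hi : i = 0
      · simp only [hf'def, hℓ'def, hi, if_pos rfl]; exact hperh n
      · simp only [hf'def, hℓ'def, if_neg hi]; exact hper _ n
    · intro i n
      by_cases hi : i = 0
      · simp only [hf'def, hi, if_pos rfl]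
        rw [win_mod hL0 hperh k n]
        have hr : n % L0 < L0 := Nat.mod_lt n hL0
        by_cases c1 : n % L0 < a
        · rw [W1 _ c1]; exact hwalk 0 _
        · by_cases c2 : n % L0 < a + ℓ (Fin.last (m + 1))
          · rw [W2 _ (by omega) c2]; exact hwalk _ _
          · rw [W3 _ (by omega) hr]; exact hwalk 0 _
      · simp only [hf'def, if_neg hi]; exact hwalk _ n
    · intro e he
      obtain ⟨i, n, hn, hw⟩ := hpart e he
      by_cases hi : i = 0
      · subst hi
        by_cases hna : n < a
        · refine ⟨0, n, ?_, ?_⟩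
          · simp only [hℓ'def, if_pos rfl]; omega
          · simp only [hf'def, if_pos rfl]
            rw [W1 n hna]; exact hw
        · refine ⟨0, n + ℓ (Fin.last (m + 1)), ?_, ?_⟩
          · simp only [hℓ'def, if_pos rfl]; omega
          · simp only [hf'def, if_pos rfl]
            rw [W3 (n + ℓ (Fin.last (m + 1))) (by omega) (by omega)]
            have e2 : n + ℓ (Fin.last (m + 1)) - ℓ (Fin.last (m + 1)) = n := by omega
            rw [e2]; exact hw
      · by_cases hil : i = Fin.last (m + 1)
        · subst hil
          refine ⟨0, a + n, ?_, ?_⟩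
          · simp only [hℓ'def, if_pos rfl]; omega
          · simp only [hf'def, if_pos rfl]
            rw [W2 (a + n) (by omega) (by omega)]
            have e2 : a + n - a = n := by omega
            rw [e2]; exact hw
        · refine ⟨i.castPred hil, n, ?_, ?_⟩
          · have hj0 : i.castPred hil ≠ 0 := by
              intro h0
              apply hi
              have := Fin.castSucc_castPred i hil
              rw [h0] at this
              simpa using this.symm
            simp only [hℓ'def, if_neg hj0, Fin.castSucc_castPred]
            exact hn
          · have hj0 : i.castPred hil ≠ 0 := by
              intro h0
              apply hi
              have := Fin.castSucc_castPred i hil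
              rw [h0] at this
              simpa using this.symm
            simp only [hf'def, if_neg hj0, Fin.castSucc_castPred]
            exact hw
    · intro i n i' n' hn hn' hw
      by_cases hi : i = 0 <;> by_cases hi' : i' = 0
      · subst hi; subst hi'
        simp only [hℓ'def, if_pos rfl] at hn hn'
        simp only [hf'def, if_pos rfl] at hw
        obtain ⟨I, N, hN, hwn, hcase⟩ := key n hn
        obtain ⟨I', N', hN', hwn', hcase'⟩ := key n' hn'
        obtain ⟨hII, hNN⟩ := huniq I N I' N' hN hN' (by rw [← hwn, ← hwn', hw])
        refine ⟨rfl, ?_⟩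
        rcases hcase with ⟨h1, h2, h3⟩ | ⟨h1, h2, h3, h4⟩ | ⟨h1, h2, h3⟩ <;>
          rcases hcase' with ⟨g1, g2, g3⟩ | ⟨g1, g2, g3, g4⟩ | ⟨g1, g2, g3⟩ <;>
          subst h1 <;> subst g1 <;>
          (try (have hIv := congrArg Fin.val hII; simp at hIv)) <;>
          omega
      · subst hi
        simp only [hℓ'def, if_pos rfl, if_neg hi'] at hn hn'
        simp only [hf'def, if_pos rfl, if_neg hi'] at hw
        obtain ⟨I, N, hN, hwn, hcase⟩ := key n hn
        obtain ⟨hII, _⟩ := huniq I N (Fin.castSucc i') n' hN hn' (by rw [← hwn, hw])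
        exfalso
        have hIv := congrArg Fin.val hII
        have hv0 : i'.val ≠ 0 := fun h0 => hi' (Fin.ext (by rw [h0, Fin.val_zero]))
        have hvlt : i'.val < m + 1 := i'.isLt
        rcases hcase with ⟨h1, _, _⟩ | ⟨h1, _, _, _⟩ | ⟨h1, _, _⟩ <;> subst h1 <;>
          simp only [Fin.val_last, Fin.coe_castSucc, Fin.val_zero] at hIv <;> omega
      · subst hi'
        simp only [hℓ'def, if_pos rfl, if_neg hi] at hn hn'
        simp only [hf'def, if_pos rfl, if_neg hi] at hw
        obtain ⟨I, N, hN, hwn, hcase⟩ := key n' hn'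
        obtain ⟨hII, _⟩ := huniq (Fin.castSucc i) n I N hn hN (by rw [← hwn, hw])
        exfalso
        have hIv := congrArg Fin.val hII
        have hv0 : i.val ≠ 0 := fun h0 => hi (Fin.ext (by rw [h0, Fin.val_zero]))
        have hvlt : i.val < m + 1 := i.isLt
        rcases hcase with ⟨h1, _, _⟩ | ⟨h1, _, _, _⟩ | ⟨h1, _, _⟩ <;> subst h1 <;>
          simp only [Fin.val_last, Fin.coe_castSucc, Fin.val_zero] at hIv <;> omega
      · simp only [hℓ'def, if_neg hi, if_neg hi'] at hn hn'
        simp only [hf'def, if_neg hi, if_neg hi'] at hw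
        obtain ⟨hII, hNN⟩ := huniq _ n _ n' hn hn' hw
        exact ⟨Fin.castSucc_injective _ hII, hNN⟩
    · intro t ht
      obtain ⟨a', ha', hta⟩ := hspan t ht
      by_cases hc : a' < a
      · refine ⟨a', ?_, ?_⟩
        · simp only [hℓ'def, if_pos rfl]; omega
        · intro j
          simp only [hf'def, if_pos rfl]
          rw [factA (a' + (j : ℕ)) (by have := j.2; omega)]
          exact hta j
      · refine ⟨a' + ℓ (Fin.last (m + 1)), ?_, ?_⟩
        · simp only [hℓ'def, if_pos rfl]; omega
        · intro j
          simp only [hf'def, if_pos rfl]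
          rw [factC (a' + ℓ (Fin.last (m + 1)) + (j : ℕ)) (by omega)
            (by have := j.2; omega)]
          have e2 : a' + ℓ (Fin.last (m + 1)) + (j : ℕ) - ℓ (Fin.last (m + 1)) =
              a' + (j : ℕ) := by omega
          rw [e2]
          exact hta j

/-- If a `k`-uniform hypergraph `G` decomposes into edge-disjoint closed tight walks
`W_0, …, W_m` covering all edges, where `W_0` is spanning (every ordered
`(k-1)`-tuple of distinct vertices appears consecutively in `W_0`), then `G` has a
tight Euler tour. -/
theorem stmt_14 {V : Type*} [Fintype V] [DecidableEq V] (k : ℕ) (hk : 1 ≤ k)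
    (G : Finset (Finset V)) (hGk : ∀ e ∈ G, e.card = k)
    (m : ℕ) (ℓ : Fin (m + 1) → ℕ) (hℓ : ∀ i, 0 < ℓ i)
    (x : ∀ i : Fin (m + 1), ZMod (ℓ i) → V)
    (hwalk : ∀ i, ∀ a : ZMod (ℓ i), windowEdge k (ℓ i) (x i) a ∈ G)
    (hpart : ∀ e ∈ G,
      ∃! p : (i : Fin (m + 1)) × ZMod (ℓ i), windowEdge k (ℓ p.1) (x p.1) p.2 = e)
    (hspan : ∀ t : Fin (k - 1) → V, Function.Injective t →
      ∃ a : ZMod (ℓ 0), ∀ j : Fin (k - 1), x 0 (a + ((j : ℕ) : ZMod (ℓ 0))) = t j) :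
    ∃ (L : ℕ) (_ : 0 < L) (y : ZMod L → V),
      (∀ i : ZMod L, windowEdge k L y i ∈ G) ∧
      (∀ e ∈ G, ∃! i : ZMod L, windowEdge k L y i = e) := by
  classical
  have hbridge : ∀ (i : Fin (m + 1)) (n : ℕ),
      windowEdge k (ℓ i) (x i) (n : ZMod (ℓ i)) =
        win k (fun s => x i (s : ZMod (ℓ i))) n := by
    intro i n
    rw [windowEdge_eq]
    unfold win
    apply Finset.image_congr
    intro j _
    show x i ((n : ZMod (ℓ i)) + (j : ZMod (ℓ i))) = x i (((n + j : ℕ) : ZMod (ℓ i)))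
    rw [Nat.cast_add]
  have hval : ∀ (i : Fin (m + 1)) (a : ZMod (ℓ i)), ((a.val : ℕ) : ZMod (ℓ i)) = a := by
    intro i a
    haveI : NeZero (ℓ i) := ⟨(hℓ i).ne'⟩
    exact ZMod.natCast_rightInverse a
  obtain ⟨L, hL, y, hyper, hywalk, hyex, hyuniq⟩ :=
    aux k hk G hGk m ℓ (fun i s => x i (s : ZMod (ℓ i))) hℓ
      (by
        intro i n
        show x i _ = x i _
        congr 1
        push_cast
        simp)
      (by intro i n; rw [← hbridge]; exact hwalk i _)
      (by
        intro e he
        obtain ⟨P, hPw, _⟩ := hpart e he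
        haveI : NeZero (ℓ P.1) := ⟨(hℓ P.1).ne'⟩
        refine ⟨P.1, P.2.val, ZMod.val_lt P.2, ?_⟩
        rw [← hbridge, hval]
        exact hPw)
      (by
        intro i n i' n' hn hn' hw
        have he : win k (fun s => x i (s : ZMod (ℓ i))) n ∈ G := by
          rw [← hbridge]; exact hwalk i _
        obtain ⟨P, hPw, hPu⟩ := hpart _ he
        have h1 := hPu ⟨i, (n : ZMod (ℓ i))⟩ (hbridge i n)
        have h2 := hPu ⟨i', (n' : ZMod (ℓ i'))⟩
          (show windowEdge k (ℓ i') (x i') (n' : ZMod (ℓ i')) =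
              win k (fun s => x i (s : ZMod (ℓ i))) n by
            rw [hbridge i' n']; exact hw.symm)
        have h3 := h1.trans h2.symm
        have hfst : i = i' := congrArg Sigma.fst h3
        subst hfst
        refine ⟨rfl, ?_⟩
        have hsnd : (n : ZMod (ℓ i)) = (n' : ZMod (ℓ i)) := by
          exact eq_of_heq (Sigma.ext_iff.mp h3).2
        have := congrArg ZMod.val hsnd
        rwa [ZMod.val_cast_of_lt hn, ZMod.val_cast_of_lt hn'] at this)
      (by
        intro t ht
        obtain ⟨a, hta⟩ := hspan t ht
        haveI : NeZero (ℓ 0) := ⟨(hℓ 0).ne'⟩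
        refine ⟨a.val, ZMod.val_lt a, ?_⟩
        intro j
        rw [← hta j]
        show x 0 (((a.val + (j : ℕ) : ℕ)) : ZMod (ℓ 0)) = x 0 (a + ((j : ℕ) : ZMod (ℓ 0)))
        rw [Nat.cast_add, hval])
  haveI : NeZero L := ⟨hL.ne'⟩
  have hbridge2 : ∀ b : ZMod L, windowEdge k L (fun c => y c.val) b = win k y b.val := by
    intro b
    rw [windowEdge_eq]
    unfold win
    apply Finset.image_congr
    intro j _
    show y ((b + (j : ZMod L)).val) = y (b.val + j)
    have e1 : (b + (j : ZMod L)).val = (b.val + j) % L := by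
      rw [ZMod.val_add, ZMod.val_natCast, Nat.add_mod b.val j,
        Nat.mod_eq_of_lt (ZMod.val_lt b)]
    rw [e1, ← per_mod hL hyper (b.val + j)]
  refine ⟨L, hL, fun c => y c.val, ?_, ?_⟩
  · intro i
    rw [hbridge2]
    exact hywalk _
  · intro e he
    obtain ⟨n, hnL, hwn⟩ := hyex e he
    refine ⟨(n : ZMod L), ?_, ?_⟩
    · show windowEdge k L (fun c => y c.val) ((n : ℕ) : ZMod L) = e
      rw [hbridge2, ZMod.val_natCast, Nat.mod_eq_of_lt hnL]
      exact hwn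
    · intro b hb
      have hb2 : windowEdge k L (fun c => y c.val) b = e := hb
      rw [hbridge2] at hb2
      have hbn : b.val = n := hyuniq b.val n (ZMod.val_lt b) hnL (hb2.trans hwn.symm)
      calc b = ((b.val : ℕ) : ZMod L) := (ZMod.natCast_rightInverse b).symm
        _ = ((n : ℕ) : ZMod L) := by rw [hbn]
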